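/- Let k₁, k₂ ≥ 1 be integers and F_{n₁,n₂} complex numbers (n₁, n₂ ≥ 1) satisfying |F_{n₁,n₂}| ≤ K₀ T₀^{−(n₁+n₂)} for some K₀, T₀ > 0. Then the double series ψ(τ₁, τ₂) = Σ_{n₁,n₂ ≥ 1} F_{n₁,n₂} τ₁^{n₁} τ₂^{n₂} / (Γ(n₁/k₁) Γ(n₂/k₂)) defines an entire function on ℂ², and there exist C, ν₁, ν₂ > 0 such that |ψ(τ₁,τ₂)| ≤ C |τ₁| |τ₂| exp(ν₁ |τ₁|^{k₁} + ν₂ |τ₂|^{k₂}) for all (τ₁,τ₂) ∈ ℂ². -/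

import Mathlib

open Complex Real

namespace Stmt18Aux

lemma gamma_ge {t : ℝ} (ht : 0 < t) (ht2 : t ≤ 2) : 1 / 6 ≤ Real.Gamma t := by
  have h1 : Real.Gamma (t + 2) = (t + 1) * (t * Real.Gamma t) := by
    rw [show t + 2 = t + 1 + 1 by ring, Real.Gamma_add_one (by positivity),
      Real.Gamma_add_one ht.ne']
  have h2 : 1 ≤ Real.Gamma (t + 2) := by
    rcases eq_or_lt_of_le (show (2:ℝ) ≤ t + 2 by linarith) with h | h
    · rw [← h, Real.Gamma_two]
    · have h3 := Real.Gamma_strictMonoOn_Ici (Set.mem_Ici.mpr le_rfl)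
        (Set.mem_Ici.mpr (by linarith : (2:ℝ) ≤ t + 2)) h
      rw [Real.Gamma_two] at h3
      exact h3.le
  have hg := Real.Gamma_pos_of_pos ht
  have h6 : (t + 1) * t ≤ 6 := by nlinarith
  have h7 : (t + 1) * t * Real.Gamma t ≤ 6 * Real.Gamma t :=
    mul_le_mul_of_nonneg_right h6 hg.le
  rw [h1] at h2
  nlinarith

lemma fact_le_gamma (n k : ℕ) (hn : 1 ≤ n) (hk : 1 ≤ k) :
    (1 / 6 : ℝ) * (Nat.factorial (n / k - 1)) ≤ Real.Gamma ((n : ℝ) / (k : ℝ)) := by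
  have hk0 : (0:ℝ) < k := by exact_mod_cast hk
  have hn0 : (0:ℝ) < n := by exact_mod_cast hn
  have ht : 0 < (n : ℝ) / k := by positivity
  rcases Nat.lt_or_ge (n / k) 2 with hq | hq
  · have hq0 : n / k - 1 = 0 := by omega
    rw [hq0, Nat.factorial_zero]
    have hlt : n < 2 * k := by
      have := (Nat.div_lt_iff_lt_mul (show 0 < k by omega)).mp hq
      omega
    have hn2 : (n:ℝ) / k ≤ 2 := by
      rw [div_le_iff₀ hk0]
      exact_mod_cast hlt.le
    simpa using gamma_ge ht hn2
  · set q := n / k with hqdef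
    have hqt : (q : ℝ) ≤ (n : ℝ) / k := by
      rw [le_div_iff₀ hk0]
      exact_mod_cast Nat.div_mul_le_self n k
    have h2q : (2:ℝ) ≤ (q:ℝ) := by exact_mod_cast hq
    have hmono := Real.Gamma_strictMonoOn_Ici.monotoneOn (Set.mem_Ici.mpr h2q)
        (Set.mem_Ici.mpr (h2q.trans hqt)) hqt
    have hq1 : 1 ≤ q := by omega
    have hΓq : Real.Gamma (q : ℝ) = Nat.factorial (q - 1) := by
      have hcast : (q:ℝ) = ((q - 1 : ℕ) : ℝ) + 1 := by
        push_cast [Nat.cast_sub hq1]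
        ring
      rw [hcast, Real.Gamma_nat_eq_factorial]
    have hfnn : (0:ℝ) ≤ Nat.factorial (q-1) := by positivity
    calc (1/6 : ℝ) * (Nat.factorial (q-1)) ≤ 1 * Nat.factorial (q-1) := by nlinarith
      _ = Real.Gamma (q:ℝ) := by rw [one_mul, hΓq]
      _ ≤ _ := hmono

lemma group_sum {k : ℕ} (hk : 1 ≤ k) {g : ℕ → ℝ} (hg0 : ∀ q, 0 ≤ g q) (hg : Summable g) :
    Summable (fun n : ℕ => g ((n + 1) / k)) ∧
      ∑' n : ℕ, g ((n + 1) / k) ≤ k * ∑' q, g q := by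
  haveI : NeZero k := ⟨by omega⟩
  have hG : Summable (fun p : ℕ × Fin k => g p.1) := by
    apply (summable_prod_of_nonneg (fun p => hg0 p.1)).mpr
    constructor
    · intro q; exact Summable.of_finite
    · simp only [tsum_fintype, Finset.sum_const, Finset.card_univ, Fintype.card_fin,
        nsmul_eq_mul]
      exact hg.mul_left _
  have hdiv : Summable (fun n : ℕ => g (n / k)) := by
    have h := (Nat.divModEquiv k).summable_iff (f := fun p : ℕ × Fin k => g p.1) |>.mpr hG
    simpa [Function.comp_def, Nat.divModEquiv] using h
  have htsum : ∑' n : ℕ, g (n / k) = k * ∑' q, g q := by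
    have h1 : ∑' n : ℕ, g (n / k) = ∑' p : ℕ × Fin k, g p.1 := by
      have := (Nat.divModEquiv k).tsum_eq (fun p : ℕ × Fin k => g p.1)
      simpa [Nat.divModEquiv] using this
    rw [h1, hG.tsum_prod' (fun b => Summable.of_finite)]
    simp only [tsum_fintype, Finset.sum_const, Finset.card_univ, Fintype.card_fin, nsmul_eq_mul]
    rw [tsum_mul_left]
  have hshift : Summable (fun n : ℕ => g ((n + 1) / k)) := by
    have := (summable_nat_add_iff (f := fun n => g (n / k)) 1).mpr hdiv
    simpa using this
  refine ⟨hshift, ?_⟩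
  have h0 : ∑' n : ℕ, g (n / k) = g 0 + ∑' n : ℕ, g ((n + 1) / k) := by
    simpa using hdiv.tsum_eq_zero_add
  calc ∑' n : ℕ, g ((n + 1) / k) ≤ g 0 + ∑' n : ℕ, g ((n + 1) / k) :=
        le_add_of_nonneg_left (hg0 0)
    _ = ∑' n : ℕ, g (n / k) := h0.symm
    _ = k * ∑' q, g q := htsum

lemma core (k : ℕ) (hk : 1 ≤ k) (x : ℝ) (hx : 0 ≤ x) :
    Summable (fun n : ℕ => x ^ (n + 1) / Real.Gamma (((n + 1 : ℕ) : ℝ) / (k : ℝ))) ∧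
      ∑' n : ℕ, x ^ (n + 1) / Real.Gamma (((n + 1 : ℕ) : ℝ) / (k : ℝ)) ≤
        24 * k * Real.exp 3 * x * Real.exp (3 * x ^ k) := by
  set z : ℝ := (max 1 x) ^ k with hzdef
  have hz1 : 1 ≤ z := by
    calc (1:ℝ) = 1 ^ k := (one_pow k).symm
      _ ≤ (max 1 x) ^ k := pow_le_pow_left₀ one_pos.le (le_max_left 1 x) k
  have hz0 : (0:ℝ) ≤ z := by linarith
  -- the shifted exponential series
  have he : Summable (fun j : ℕ => z ^ j / (Nat.factorial j : ℝ)) :=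
    Real.summable_pow_div_factorial z
  have hexp : Real.exp z = ∑' q : ℕ, z ^ q / (Nat.factorial q : ℝ) := by
    rw [Real.exp_eq_exp_ℝ, NormedSpace.exp_eq_tsum_div]
  have hh : Summable (fun q : ℕ => z ^ (q - 1) / (Nat.factorial (q - 1) : ℝ)) := by
    apply (summable_nat_add_iff 1).mp
    simpa using he
  have hhsum : ∑' q : ℕ, z ^ (q - 1) / (Nat.factorial (q - 1) : ℝ) ≤ 1 + Real.exp z := by
    rw [hh.tsum_eq_zero_add]
    simp only [Nat.zero_sub, pow_zero, Nat.factorial_zero, Nat.cast_one, div_one,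
      Nat.add_sub_cancel]
    rw [hexp]
  -- the grouped series g
  set g : ℕ → ℝ := fun q => z ^ (q + 1) / (Nat.factorial (q - 1) : ℝ) with hgdef
  have hg0 : ∀ q, 0 ≤ g q := by
    intro q
    have : (0:ℝ) < Nat.factorial (q - 1) := by exact_mod_cast (q-1).factorial_pos
    positivity
  have hgle : ∀ q, g q ≤ (2 * z ^ 2) * (z ^ (q - 1) / (Nat.factorial (q - 1) : ℝ)) := by
    intro q
    have hfp : (0:ℝ) < Nat.factorial (q - 1) := by exact_mod_cast (q-1).factorial_pos
    rcases Nat.eq_zero_or_pos q with h | h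
    · subst h
      simp only [hgdef, Nat.zero_sub, pow_zero, pow_one, Nat.factorial_zero, Nat.cast_one,
        div_one, zero_add, mul_one]
      nlinarith
    · have hpow : z ^ (q + 1) = z ^ 2 * z ^ (q - 1) := by
        rw [← pow_add]; congr 1; omega
      have hnn : (0:ℝ) ≤ z ^ (q - 1) / (Nat.factorial (q - 1) : ℝ) := by positivity
      calc g q = z ^ 2 * (z ^ (q - 1) / (Nat.factorial (q - 1) : ℝ)) := by
            rw [hgdef]; simp only []; rw [hpow, mul_div_assoc]
        _ ≤ (2 * z ^ 2) * (z ^ (q - 1) / (Nat.factorial (q - 1) : ℝ)) := by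
            apply mul_le_mul_of_nonneg_right _ hnn
            nlinarith
  have hgs : Summable g := Summable.of_nonneg_of_le hg0 hgle (hh.mul_left _)
  have hgsum : ∑' q, g q ≤ 4 * Real.exp (3 * z) := by
    have h1 : ∑' q, g q ≤ (2 * z ^ 2) * (1 + Real.exp z) := by
      calc ∑' q, g q ≤ ∑' q, (2 * z ^ 2) * (z ^ (q - 1) / (Nat.factorial (q - 1) : ℝ)) :=
            Summable.tsum_le_tsum hgle hgs (hh.mul_left _)
        _ = (2 * z ^ 2) * ∑' q, z ^ (q - 1) / (Nat.factorial (q - 1) : ℝ) := tsum_mul_left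
        _ ≤ (2 * z ^ 2) * (1 + Real.exp z) := by
            apply mul_le_mul_of_nonneg_left hhsum (by positivity)
    have hze : z ≤ Real.exp z := by linarith [Real.add_one_le_exp z]
    have h1e : 1 ≤ Real.exp z := Real.one_le_exp hz0
    have hzz : z * z ≤ Real.exp z * Real.exp z := mul_le_mul hze hze hz0 (Real.exp_pos z).le
    have hexp3 : Real.exp (3 * z) = Real.exp z * Real.exp z * Real.exp z := by
      rw [← Real.exp_add, ← Real.exp_add]; ring_nf
    rw [hexp3]
    nlinarith [Real.exp_pos z]
  have hgrp := group_sum hk hg0 hgs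
  have hΓpos : ∀ n : ℕ, 0 < Real.Gamma (((n + 1 : ℕ) : ℝ) / (k : ℝ)) := by
    intro n
    apply Real.Gamma_pos_of_pos
    have h1 : (0:ℝ) < ((n + 1 : ℕ) : ℝ) := by positivity
    have h2 : (0:ℝ) < (k : ℝ) := by exact_mod_cast hk
    positivity
  have hwle : ∀ n : ℕ, x ^ (n + 1) / Real.Gamma (((n + 1 : ℕ) : ℝ) / (k : ℝ)) ≤
      (6 * x) * g ((n + 1) / k) := by
    intro n
    set q := (n + 1) / k with hq
    have hfg := fact_le_gamma (n + 1) k (by omega) hk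
    have hfacpos : (0:ℝ) < (Nat.factorial (q - 1) : ℝ) := by
      exact_mod_cast (q - 1).factorial_pos
    have hxn : x ^ (n + 1) ≤ x * z ^ (q + 1) := by
      have hnle : n ≤ (q + 1) * k := by
        have h1 := Nat.div_add_mod (n + 1) k
        have h2 := Nat.mod_lt (n + 1) (show 0 < k by omega)
        rw [← hq] at h1
        have h3 : n + 1 < k * (q + 1) := by
          rw [Nat.mul_add, Nat.mul_one, ← h1]
          exact Nat.add_lt_add_left h2 _
        rw [mul_comm]
        exact (Nat.lt_of_succ_lt h3).le
      calc x ^ (n + 1) = x * x ^ n := by ring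
        _ ≤ x * (max 1 x) ^ n := by
            apply mul_le_mul_of_nonneg_left (pow_le_pow_left₀ hx (le_max_right 1 x) n) hx
        _ ≤ x * (max 1 x) ^ ((q + 1) * k) := by
            apply mul_le_mul_of_nonneg_left (pow_le_pow_right₀ (le_max_left 1 x) hnle) hx
        _ = x * z ^ (q + 1) := by rw [hzdef, ← pow_mul, mul_comm (q + 1) k]
    have hx1nn : (0:ℝ) ≤ x ^ (n + 1) := by positivity
    calc x ^ (n + 1) / Real.Gamma (((n + 1 : ℕ) : ℝ) / (k : ℝ))
        ≤ x ^ (n + 1) / ((1 / 6 : ℝ) * (Nat.factorial (q - 1) : ℝ)) := by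
          apply div_le_div_of_nonneg_left hx1nn (by positivity) hfg
      _ = 6 * (x ^ (n + 1) / (Nat.factorial (q - 1) : ℝ)) := by
          have hne := hfacpos.ne'
          field_simp
      _ ≤ 6 * ((x * z ^ (q + 1)) / (Nat.factorial (q - 1) : ℝ)) := by
          apply mul_le_mul_of_nonneg_left _ (by norm_num)
          exact (div_le_div_iff_of_pos_right hfacpos).mpr hxn
      _ = (6 * x) * g q := by
          rw [hgdef]; ring
  have hwnn : ∀ n : ℕ, (0:ℝ) ≤ x ^ (n + 1) / Real.Gamma (((n + 1 : ℕ) : ℝ) / (k : ℝ)) :=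
    fun n => div_nonneg (by positivity) (hΓpos n).le
  have hws : Summable (fun n : ℕ => x ^ (n + 1) / Real.Gamma (((n + 1 : ℕ) : ℝ) / (k : ℝ))) :=
    Summable.of_nonneg_of_le hwnn hwle (hgrp.1.mul_left _)
  refine ⟨hws, ?_⟩
  have hzle : z ≤ 1 + x ^ k := by
    rcases le_total x 1 with h | h
    · rw [hzdef, max_eq_left h, one_pow]
      have : (0:ℝ) ≤ x ^ k := by positivity
      linarith
    · rw [hzdef, max_eq_right h]
      linarith
  have hexpz : Real.exp (3 * z) ≤ Real.exp 3 * Real.exp (3 * x ^ k) := by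
    rw [← Real.exp_add]
    apply Real.exp_le_exp.mpr
    linarith
  have hknn : (0:ℝ) ≤ (k:ℝ) := by positivity
  calc ∑' n : ℕ, x ^ (n + 1) / Real.Gamma (((n + 1 : ℕ) : ℝ) / (k : ℝ))
      ≤ ∑' n : ℕ, (6 * x) * g ((n + 1) / k) :=
        Summable.tsum_le_tsum hwle hws (hgrp.1.mul_left _)
    _ = (6 * x) * ∑' n : ℕ, g ((n + 1) / k) := tsum_mul_left
    _ ≤ (6 * x) * (k * ∑' q, g q) := by
        apply mul_le_mul_of_nonneg_left hgrp.2 (by positivity)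
    _ ≤ (6 * x) * (k * (4 * Real.exp (3 * z))) := by
        apply mul_le_mul_of_nonneg_left _ (by positivity)
        apply mul_le_mul_of_nonneg_left hgsum hknn
    _ ≤ (6 * x) * (k * (4 * (Real.exp 3 * Real.exp (3 * x ^ k)))) := by
        apply mul_le_mul_of_nonneg_left _ (by positivity)
        apply mul_le_mul_of_nonneg_left _ hknn
        apply mul_le_mul_of_nonneg_left hexpz (by norm_num)
    _ = 24 * k * Real.exp 3 * x * Real.exp (3 * x ^ k) := by ring

lemma gamma_pos (k n : ℕ) (hk : 1 ≤ k) : 0 < Real.Gamma (((n + 1 : ℕ) : ℝ) / (k : ℝ)) := by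
  apply Real.Gamma_pos_of_pos
  have h1 : (0:ℝ) < ((n + 1 : ℕ) : ℝ) := by positivity
  have h2 : (0:ℝ) < (k : ℝ) := by exact_mod_cast hk
  positivity

lemma prod_bound (k₁ k₂ : ℕ) (hk₁ : 1 ≤ k₁) (hk₂ : 1 ≤ k₂) (y₁ y₂ : ℝ)
    (h₁ : 0 ≤ y₁) (h₂ : 0 ≤ y₂) :
    Summable (fun p : ℕ × ℕ =>
      (y₁ ^ (p.1 + 1) / Real.Gamma (((p.1 + 1 : ℕ) : ℝ) / (k₁ : ℝ))) *
      (y₂ ^ (p.2 + 1) / Real.Gamma (((p.2 + 1 : ℕ) : ℝ) / (k₂ : ℝ)))) ∧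
    ∑' p : ℕ × ℕ,
      (y₁ ^ (p.1 + 1) / Real.Gamma (((p.1 + 1 : ℕ) : ℝ) / (k₁ : ℝ))) *
      (y₂ ^ (p.2 + 1) / Real.Gamma (((p.2 + 1 : ℕ) : ℝ) / (k₂ : ℝ))) ≤
      (24 * k₁ * Real.exp 3 * y₁ * Real.exp (3 * y₁ ^ k₁)) *
      (24 * k₂ * Real.exp 3 * y₂ * Real.exp (3 * y₂ ^ k₂)) := by
  obtain ⟨s₁, b₁⟩ := core k₁ hk₁ y₁ h₁
  obtain ⟨s₂, b₂⟩ := core k₂ hk₂ y₂ h₂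
  have hnn₁ : ∀ n : ℕ, 0 ≤ y₁ ^ (n + 1) / Real.Gamma (((n + 1 : ℕ) : ℝ) / (k₁ : ℝ)) :=
    fun n => div_nonneg (by positivity) (gamma_pos k₁ n hk₁).le
  have hnn₂ : ∀ n : ℕ, 0 ≤ y₂ ^ (n + 1) / Real.Gamma (((n + 1 : ℕ) : ℝ) / (k₂ : ℝ)) :=
    fun n => div_nonneg (by positivity) (gamma_pos k₂ n hk₂).le
  have hs := s₁.mul_of_nonneg s₂ hnn₁ hnn₂
  refine ⟨hs, ?_⟩
  rw [← Summable.tsum_mul_tsum s₁ s₂ hs]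
  exact mul_le_mul b₁ b₂ (tsum_nonneg hnn₂) (by positivity)

lemma gamma_complex (k n : ℕ) :
    Complex.Gamma (((n + 1 : ℕ) : ℂ) / (k : ℂ)) =
      ((Real.Gamma (((n + 1 : ℕ) : ℝ) / (k : ℝ)) : ℝ) : ℂ) := by
  rw [← Complex.Gamma_ofReal]
  congr 1
  push_cast
  ring

lemma term_bound {K₀ T₀ G₁ G₂ Fv a b : ℝ} (m n : ℕ) (hK₀ : 0 ≤ K₀) (hT₀ : 0 < T₀)
    (hG₁ : 0 < G₁) (hG₂ : 0 < G₂)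
    (hFb : Fv ≤ K₀ * (T₀ ^ (m + 1))⁻¹ * (T₀ ^ (n + 1))⁻¹)
    (ha : 0 ≤ a) (hb : 0 ≤ b) :
    Fv / (G₁ * G₂) * (a ^ (m + 1) * b ^ (n + 1)) ≤
      K₀ * ((a / T₀) ^ (m + 1) / G₁ * ((b / T₀) ^ (n + 1) / G₂)) := by
  have h1 : Fv / (G₁ * G₂) * (a ^ (m + 1) * b ^ (n + 1)) ≤
      (K₀ * (T₀ ^ (m + 1))⁻¹ * (T₀ ^ (n + 1))⁻¹) / (G₁ * G₂) * (a ^ (m + 1) * b ^ (n + 1)) := by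
    apply mul_le_mul_of_nonneg_right _ (by positivity)
    exact (div_le_div_iff_of_pos_right (by positivity)).mpr hFb
  refine h1.trans_eq ?_
  rw [div_pow, div_pow]
  simp only [div_eq_mul_inv, mul_inv]
  ring

end Stmt18Aux

open Stmt18Aux in
/-- The formal Borel transform of orders `(k₁,k₂)` of a double power series with
geometrically bounded coefficients defines an entire function on `ℂ²` with exponential
growth of order `(k₁,k₂)`: there is `ψ : ℂ × ℂ → ℂ`, entire, whose double power series is
`Σ_{n₁,n₂ ≥ 1} F_{n₁,n₂} τ₁^{n₁} τ₂^{n₂} / (Γ(n₁/k₁)Γ(n₂/k₂))`, and constants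
`C, ν₁, ν₂ > 0` with `|ψ(τ₁,τ₂)| ≤ C|τ₁||τ₂| exp(ν₁|τ₁|^{k₁} + ν₂|τ₂|^{k₂})`. -/
theorem stmt18 (k₁ k₂ : ℕ) (hk₁ : 1 ≤ k₁) (hk₂ : 1 ≤ k₂)
    (F : ℕ → ℕ → ℂ) (K₀ T₀ : ℝ) (hK₀ : 0 < K₀) (hT₀ : 0 < T₀)
    (hF : ∀ n₁ n₂ : ℕ, 1 ≤ n₁ → 1 ≤ n₂ →
      ‖F n₁ n₂‖ ≤ K₀ * T₀ ^ (-((n₁ : ℝ) + n₂))) :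
    ∃ ψ : ℂ × ℂ → ℂ, Differentiable ℂ ψ ∧
      (∀ τ₁ τ₂ : ℂ,
        HasSum
          (fun p : ℕ × ℕ =>
            F (p.1 + 1) (p.2 + 1) * τ₁ ^ (p.1 + 1) * τ₂ ^ (p.2 + 1) /
              (Complex.Gamma (((p.1 + 1 : ℕ) : ℂ) / (k₁ : ℂ)) *
                Complex.Gamma (((p.2 + 1 : ℕ) : ℂ) / (k₂ : ℂ))))
          (ψ (τ₁, τ₂))) ∧
      ∃ C ν₁ ν₂ : ℝ, 0 < C ∧ 0 < ν₁ ∧ 0 < ν₂ ∧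
        ∀ τ₁ τ₂ : ℂ,
          ‖ψ (τ₁, τ₂)‖ ≤
            C * ‖τ₁‖ * ‖τ₂‖ *
              Real.exp (ν₁ * ‖τ₁‖ ^ k₁ + ν₂ * ‖τ₂‖ ^ k₂) := by
  classical
  set G₁ : ℕ → ℝ := fun m => Real.Gamma (((m + 1 : ℕ) : ℝ) / (k₁ : ℝ)) with hG₁def
  set G₂ : ℕ → ℝ := fun m => Real.Gamma (((m + 1 : ℕ) : ℝ) / (k₂ : ℝ)) with hG₂def
  have hG₁pos : ∀ m, 0 < G₁ m := fun m => gamma_pos k₁ m hk₁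
  have hG₂pos : ∀ m, 0 < G₂ m := fun m => gamma_pos k₂ m hk₂
  set c : ℕ × ℕ → ℂ := fun p => F (p.1 + 1) (p.2 + 1) /
      (Complex.Gamma (((p.1 + 1 : ℕ) : ℂ) / (k₁ : ℂ)) *
       Complex.Gamma (((p.2 + 1 : ℕ) : ℂ) / (k₂ : ℂ))) with hcdef
  set f : ℕ × ℕ → ℂ × ℂ → ℂ := fun p z => c p * (z.1 ^ (p.1 + 1) * z.2 ^ (p.2 + 1)) with hfdef
  have hcabs : ∀ p : ℕ × ℕ, ‖c p‖ =
      ‖F (p.1 + 1) (p.2 + 1)‖ / (G₁ p.1 * G₂ p.2) := by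
    intro p
    rw [hcdef]
    simp only []
    rw [norm_div, norm_mul, gamma_complex, gamma_complex,
      Complex.norm_real, Complex.norm_real, Real.norm_eq_abs, Real.norm_eq_abs, abs_of_pos (hG₁pos p.1), abs_of_pos (hG₂pos p.2)]
  have habsF : ∀ p : ℕ × ℕ, ‖F (p.1 + 1) (p.2 + 1)‖ ≤
      K₀ * (T₀ ^ (p.1 + 1))⁻¹ * (T₀ ^ (p.2 + 1))⁻¹ := by
    intro p
    have h := hF (p.1 + 1) (p.2 + 1) (by omega) (by omega)
    have heq : T₀ ^ (-(((p.1 + 1 : ℕ) : ℝ) + ((p.2 + 1 : ℕ) : ℝ))) =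
        (T₀ ^ (p.1 + 1))⁻¹ * (T₀ ^ (p.2 + 1))⁻¹ := by
      rw [Real.rpow_neg hT₀.le, Real.rpow_add hT₀, Real.rpow_natCast, Real.rpow_natCast, mul_inv]
    rw [heq] at h
    calc ‖F (p.1 + 1) (p.2 + 1)‖ ≤
        K₀ * ((T₀ ^ (p.1 + 1))⁻¹ * (T₀ ^ (p.2 + 1))⁻¹) := h
      _ = K₀ * (T₀ ^ (p.1 + 1))⁻¹ * (T₀ ^ (p.2 + 1))⁻¹ := by ring
  have hfb : ∀ (p : ℕ × ℕ) (z : ℂ × ℂ), ‖f p z‖ ≤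
      K₀ * ((‖z.1‖ / T₀) ^ (p.1 + 1) / G₁ p.1 *
        ((‖z.2‖ / T₀) ^ (p.2 + 1) / G₂ p.2)) := by
    intro p z
    have h1 : ‖f p z‖ =
        ‖F (p.1 + 1) (p.2 + 1)‖ / (G₁ p.1 * G₂ p.2) *
          (‖z.1‖ ^ (p.1 + 1) * ‖z.2‖ ^ (p.2 + 1)) := by
      rw [hfdef]
      simp only []
      rw [norm_mul, hcabs, norm_mul, norm_pow, norm_pow]
    rw [h1]
    exact term_bound p.1 p.2 hK₀.le hT₀ (hG₁pos p.1) (hG₂pos p.2) (habsF p)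
      (norm_nonneg _) (norm_nonneg _)
  have hsum_abs : ∀ z : ℂ × ℂ, Summable (fun p : ℕ × ℕ => ‖f p z‖) := by
    intro z
    have hb := (prod_bound k₁ k₂ hk₁ hk₂ (‖z.1‖ / T₀) (‖z.2‖ / T₀)
      (by positivity) (by positivity)).1
    exact Summable.of_nonneg_of_le (fun p => norm_nonneg _) (fun p => hfb p z)
      (hb.mul_left K₀)
  have hsum : ∀ z : ℂ × ℂ, Summable (fun p : ℕ × ℕ => f p z) := by
    intro z
    apply Summable.of_norm
    exact hsum_abs z
  refine ⟨fun z => ∑' p : ℕ × ℕ, f p z, ?_, ?_, ?_⟩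
  · -- Differentiability
    intro z₀
    set R : ℝ := ‖z₀‖ + 1 with hRdef
    have hR1 : 1 ≤ R := le_add_of_nonneg_left (norm_nonneg z₀)
    have hR0 : (0:ℝ) < R := lt_of_lt_of_le one_pos hR1
    set y : ℝ := 2 * R / T₀ with hydef
    have hy0 : (0:ℝ) ≤ y := by positivity
    have hu : Summable (fun p : ℕ × ℕ =>
        K₀ * (y ^ (p.1 + 1) / G₁ p.1 * (y ^ (p.2 + 1) / G₂ p.2))) :=
      ((prod_bound k₁ k₂ hk₁ hk₂ y y hy0 hy0).1).mul_left K₀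
    set f' : ℕ × ℕ → ℂ × ℂ → (ℂ × ℂ) →L[ℂ] ℂ := fun p z =>
      c p • (z.1 ^ (p.1 + 1) •
          ((((p.2 + 1 : ℕ) : ℂ) * z.2 ^ p.2) • ContinuousLinearMap.snd ℂ ℂ ℂ) +
        z.2 ^ (p.2 + 1) •
          ((((p.1 + 1 : ℕ) : ℂ) * z.1 ^ p.1) • ContinuousLinearMap.fst ℂ ℂ ℂ)) with hf'def
    have hder : ∀ (p : ℕ × ℕ) (z : ℂ × ℂ), HasFDerivAt (f p) (f' p z) z := by
      intro p z
      have h1 : HasFDerivAt (fun w : ℂ × ℂ => w.1 ^ (p.1 + 1))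
          ((((p.1 + 1 : ℕ) : ℂ) * z.1 ^ p.1) • ContinuousLinearMap.fst ℂ ℂ ℂ) z := by
        have h := (hasDerivAt_pow (p.1 + 1) z.1).comp_hasFDerivAt z
          (hasFDerivAt_fst : HasFDerivAt Prod.fst (ContinuousLinearMap.fst ℂ ℂ ℂ) z)
        simpa [Function.comp_def] using h
      have h2 : HasFDerivAt (fun w : ℂ × ℂ => w.2 ^ (p.2 + 1))
          ((((p.2 + 1 : ℕ) : ℂ) * z.2 ^ p.2) • ContinuousLinearMap.snd ℂ ℂ ℂ) z := by
        have h := (hasDerivAt_pow (p.2 + 1) z.2).comp_hasFDerivAt z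
          (hasFDerivAt_snd : HasFDerivAt Prod.snd (ContinuousLinearMap.snd ℂ ℂ ℂ) z)
        simpa [Function.comp_def] using h
      exact (h1.mul h2).const_mul (c p)
    have hball : z₀ ∈ Metric.ball (0 : ℂ × ℂ) R := by
      simp only [Metric.mem_ball, dist_zero_right]
      rw [hRdef]
      exact lt_add_one _
    have hbound : ∀ (p : ℕ × ℕ), ∀ z ∈ Metric.ball (0 : ℂ × ℂ) R,
        ‖f' p z‖ ≤ K₀ * (y ^ (p.1 + 1) / G₁ p.1 * (y ^ (p.2 + 1) / G₂ p.2)) := by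
      intro p z hz
      have hz' : ‖z‖ < R := by simpa [Metric.mem_ball, dist_zero_right] using hz
      have hz1 : ‖z.1‖ ≤ R := le_trans (norm_fst_le z) hz'.le
      have hz2 : ‖z.2‖ ≤ R := le_trans (norm_snd_le z) hz'.le
      have hA1 : ‖(((p.1 + 1 : ℕ) : ℂ) * z.1 ^ p.1) • ContinuousLinearMap.fst ℂ ℂ ℂ‖ ≤
          ((p.1 + 1 : ℕ) : ℝ) * R ^ p.1 := by
        refine (ContinuousLinearMap.opNorm_smul_le ((((p.1 + 1 : ℕ) : ℂ)) * z.1 ^ p.1)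
          (ContinuousLinearMap.fst ℂ ℂ ℂ)).trans ?_
        rw [norm_mul, norm_pow, Complex.norm_natCast]
        have hfst := ContinuousLinearMap.norm_fst_le (𝕜 := ℂ) (E := ℂ) (F := ℂ)
        have hnn : (0:ℝ) ≤ ((p.1 + 1 : ℕ) : ℝ) * ‖z.1‖ ^ p.1 := by positivity
        calc ((p.1 + 1 : ℕ) : ℝ) * ‖z.1‖ ^ p.1 * ‖ContinuousLinearMap.fst ℂ ℂ ℂ‖ ≤
            ((p.1 + 1 : ℕ) : ℝ) * ‖z.1‖ ^ p.1 * 1 := mul_le_mul_of_nonneg_left hfst hnn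
          _ = ((p.1 + 1 : ℕ) : ℝ) * ‖z.1‖ ^ p.1 := mul_one _
          _ ≤ ((p.1 + 1 : ℕ) : ℝ) * R ^ p.1 :=
              mul_le_mul_of_nonneg_left (pow_le_pow_left₀ (norm_nonneg _) hz1 _)
                (Nat.cast_nonneg _)
      have hA2 : ‖(((p.2 + 1 : ℕ) : ℂ) * z.2 ^ p.2) • ContinuousLinearMap.snd ℂ ℂ ℂ‖ ≤
          ((p.2 + 1 : ℕ) : ℝ) * R ^ p.2 := by
        refine (ContinuousLinearMap.opNorm_smul_le ((((p.2 + 1 : ℕ) : ℂ)) * z.2 ^ p.2)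
          (ContinuousLinearMap.snd ℂ ℂ ℂ)).trans ?_
        rw [norm_mul, norm_pow, Complex.norm_natCast]
        have hsnd := ContinuousLinearMap.norm_snd_le (𝕜 := ℂ) (E := ℂ) (F := ℂ)
        have hnn : (0:ℝ) ≤ ((p.2 + 1 : ℕ) : ℝ) * ‖z.2‖ ^ p.2 := by positivity
        calc ((p.2 + 1 : ℕ) : ℝ) * ‖z.2‖ ^ p.2 * ‖ContinuousLinearMap.snd ℂ ℂ ℂ‖ ≤
            ((p.2 + 1 : ℕ) : ℝ) * ‖z.2‖ ^ p.2 * 1 := mul_le_mul_of_nonneg_left hsnd hnn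
          _ = ((p.2 + 1 : ℕ) : ℝ) * ‖z.2‖ ^ p.2 := mul_one _
          _ ≤ ((p.2 + 1 : ℕ) : ℝ) * R ^ p.2 :=
              mul_le_mul_of_nonneg_left (pow_le_pow_left₀ (norm_nonneg _) hz2 _)
                (Nat.cast_nonneg _)
      have hRpnn : ∀ j : ℕ, (0:ℝ) ≤ R ^ j := fun j => pow_nonneg hR0.le j
      have hDnn : (0:ℝ) ≤ R ^ (p.1 + 1) * (((p.2 + 1 : ℕ) : ℝ) * R ^ p.2) +
          R ^ (p.2 + 1) * (((p.1 + 1 : ℕ) : ℝ) * R ^ p.1) :=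
        add_nonneg (mul_nonneg (hRpnn _) (mul_nonneg (Nat.cast_nonneg _) (hRpnn _)))
          (mul_nonneg (hRpnn _) (mul_nonneg (Nat.cast_nonneg _) (hRpnn _)))
      have hnorm : ‖f' p z‖ ≤ ‖c p‖ *
          (R ^ (p.1 + 1) * (((p.2 + 1 : ℕ) : ℝ) * R ^ p.2) +
           R ^ (p.2 + 1) * (((p.1 + 1 : ℕ) : ℝ) * R ^ p.1)) := by
        rw [hf'def]
        simp only []
        refine (ContinuousLinearMap.opNorm_smul_le (c p) _).trans ?_
        apply mul_le_mul_of_nonneg_left _ (norm_nonneg _)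
        refine (norm_add_le _ _).trans ?_
        apply add_le_add
        · refine (ContinuousLinearMap.opNorm_smul_le (z.1 ^ (p.1 + 1)) _).trans ?_
          rw [norm_pow]
          exact mul_le_mul (pow_le_pow_left₀ (norm_nonneg _) hz1 _) hA2 (norm_nonneg _) (hRpnn _)
        · refine (ContinuousLinearMap.opNorm_smul_le (z.2 ^ (p.2 + 1)) _).trans ?_
          rw [norm_pow]
          exact mul_le_mul (pow_le_pow_left₀ (norm_nonneg _) hz2 _) hA1 (norm_nonneg _) (hRpnn _)
      have hcb : ‖c p‖ ≤ K₀ * (T₀ ^ (p.1 + 1))⁻¹ * (T₀ ^ (p.2 + 1))⁻¹ / (G₁ p.1 * G₂ p.2) := by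
        rw [hcabs]
        exact (div_le_div_iff_of_pos_right (mul_pos (hG₁pos p.1) (hG₂pos p.2))).mpr (habsF p)
      have hDe : R ^ (p.1 + 1) * (((p.2 + 1 : ℕ) : ℝ) * R ^ p.2) +
          R ^ (p.2 + 1) * (((p.1 + 1 : ℕ) : ℝ) * R ^ p.1) ≤
          (2 * R) ^ (p.1 + 1) * (2 * R) ^ (p.2 + 1) := by
        have hp1 : R ^ (p.1 + 1) * R ^ p.2 = R ^ (p.1 + p.2 + 1) := by
          rw [← pow_add]; congr 1; omega
        have hp2 : R ^ (p.2 + 1) * R ^ p.1 = R ^ (p.1 + p.2 + 1) := by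
          rw [← pow_add]; congr 1; omega
        have hRp : R ^ (p.1 + p.2 + 1) ≤ R ^ (p.1 + p.2 + 2) :=
          pow_le_pow_right₀ hR1 (by omega)
        have h2p : ((p.1 : ℝ) + p.2 + 2) ≤ 2 ^ (p.1 + p.2 + 2) := by
          have h := (Nat.lt_two_pow_self (n := p.1 + p.2 + 2)).le
          exact_mod_cast h
        calc R ^ (p.1 + 1) * (((p.2 + 1 : ℕ) : ℝ) * R ^ p.2) +
            R ^ (p.2 + 1) * (((p.1 + 1 : ℕ) : ℝ) * R ^ p.1)
            = ((p.1 : ℝ) + p.2 + 2) * R ^ (p.1 + p.2 + 1) := by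
              push_cast
              rw [show R ^ (p.1 + 1) * (((p.2 : ℝ) + 1) * R ^ p.2) =
                  ((p.2 : ℝ) + 1) * (R ^ (p.1 + 1) * R ^ p.2) from by ring,
                show R ^ (p.2 + 1) * (((p.1 : ℝ) + 1) * R ^ p.1) =
                  ((p.1 : ℝ) + 1) * (R ^ (p.2 + 1) * R ^ p.1) from by ring,
                hp1, hp2]
              ring
          _ ≤ (2 : ℝ) ^ (p.1 + p.2 + 2) * R ^ (p.1 + p.2 + 2) := by
              apply mul_le_mul h2p hRp (hRpnn _) (by positivity)
          _ = (2 * R) ^ (p.1 + 1) * (2 * R) ^ (p.2 + 1) := by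
              rw [← pow_add, ← mul_pow]
              congr 1
              omega
      have hKnn : (0:ℝ) ≤ K₀ * (T₀ ^ (p.1 + 1))⁻¹ * (T₀ ^ (p.2 + 1))⁻¹ / (G₁ p.1 * G₂ p.2) := by
        apply le_of_lt
        apply div_pos
        · exact mul_pos (mul_pos hK₀ (inv_pos.mpr (pow_pos hT₀ _))) (inv_pos.mpr (pow_pos hT₀ _))
        · exact mul_pos (hG₁pos p.1) (hG₂pos p.2)
      calc ‖f' p z‖ ≤ ‖c p‖ *
          (R ^ (p.1 + 1) * (((p.2 + 1 : ℕ) : ℝ) * R ^ p.2) +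
           R ^ (p.2 + 1) * (((p.1 + 1 : ℕ) : ℝ) * R ^ p.1)) := hnorm
        _ ≤ (K₀ * (T₀ ^ (p.1 + 1))⁻¹ * (T₀ ^ (p.2 + 1))⁻¹ / (G₁ p.1 * G₂ p.2)) *
            ((2 * R) ^ (p.1 + 1) * (2 * R) ^ (p.2 + 1)) :=
          mul_le_mul hcb hDe hDnn hKnn
        _ = K₀ * (y ^ (p.1 + 1) / G₁ p.1 * (y ^ (p.2 + 1) / G₂ p.2)) := by
            rw [hydef, div_pow, div_pow]
            have hG1ne := (hG₁pos p.1).ne'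
            have hG2ne := (hG₂pos p.2).ne'
            have hTne : T₀ ≠ 0 := hT₀.ne'
            field_simp
    have key := hasFDerivAt_tsum_of_isPreconnected hu Metric.isOpen_ball
      (convex_ball (0 : ℂ × ℂ) R).isPreconnected (fun p z _ => hder p z) hbound hball
      (hsum z₀) hball
    exact key.differentiableAt
  · -- HasSum
    intro τ₁ τ₂
    have heq : (fun p : ℕ × ℕ =>
        F (p.1 + 1) (p.2 + 1) * τ₁ ^ (p.1 + 1) * τ₂ ^ (p.2 + 1) /
          (Complex.Gamma (((p.1 + 1 : ℕ) : ℂ) / (k₁ : ℂ)) *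
            Complex.Gamma (((p.2 + 1 : ℕ) : ℂ) / (k₂ : ℂ)))) =
        (fun p : ℕ × ℕ => f p (τ₁, τ₂)) := by
      funext p
      rw [hfdef, hcdef]
      simp only []
      ring
    rw [heq]
    exact (hsum (τ₁, τ₂)).hasSum
  · -- growth bound
    have hk₁R : (0:ℝ) < (k₁ : ℝ) := by exact_mod_cast hk₁
    have hk₂R : (0:ℝ) < (k₂ : ℝ) := by exact_mod_cast hk₂
    refine ⟨K₀ * (24 * k₁ * Real.exp 3 / T₀) * (24 * k₂ * Real.exp 3 / T₀),
      3 / T₀ ^ k₁, 3 / T₀ ^ k₂, ?_, by positivity, by positivity, ?_⟩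
    · apply mul_pos
      apply mul_pos hK₀
      · exact div_pos (mul_pos (mul_pos (by norm_num) hk₁R) (Real.exp_pos 3)) hT₀
      · exact div_pos (mul_pos (mul_pos (by norm_num) hk₂R) (Real.exp_pos 3)) hT₀
    intro τ₁ τ₂
    obtain ⟨hps, hpb⟩ := prod_bound k₁ k₂ hk₁ hk₂ (‖τ₁‖ / T₀) (‖τ₂‖ / T₀)
      (by positivity) (by positivity)
    have hsa : Summable (fun p : ℕ × ℕ => ‖f p (τ₁, τ₂)‖) := by
      exact hsum_abs (τ₁, τ₂)
    have hfb' : ∀ p : ℕ × ℕ, ‖f p (τ₁, τ₂)‖ ≤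
        K₀ * ((‖τ₁‖ / T₀) ^ (p.1 + 1) / G₁ p.1 *
          ((‖τ₂‖ / T₀) ^ (p.2 + 1) / G₂ p.2)) := fun p => hfb p (τ₁, τ₂)
    have h1 : ‖∑' p : ℕ × ℕ, f p (τ₁, τ₂)‖ ≤
        ∑' p : ℕ × ℕ, ‖f p (τ₁, τ₂)‖ := by
      have h := norm_tsum_le_tsum_norm hsa
      exact h
    have h2 : ∑' p : ℕ × ℕ, ‖f p (τ₁, τ₂)‖ ≤
        K₀ * ∑' p : ℕ × ℕ, ((‖τ₁‖ / T₀) ^ (p.1 + 1) / G₁ p.1 *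
          ((‖τ₂‖ / T₀) ^ (p.2 + 1) / G₂ p.2)) := by
      rw [← tsum_mul_left]
      exact Summable.tsum_le_tsum hfb' (hsum_abs (τ₁, τ₂)) (hps.mul_left K₀)
    have h3 : K₀ * ∑' p : ℕ × ℕ, ((‖τ₁‖ / T₀) ^ (p.1 + 1) / G₁ p.1 *
          ((‖τ₂‖ / T₀) ^ (p.2 + 1) / G₂ p.2)) ≤
        K₀ * ((24 * k₁ * Real.exp 3 * (‖τ₁‖ / T₀) *
            Real.exp (3 * (‖τ₁‖ / T₀) ^ k₁)) *
          (24 * k₂ * Real.exp 3 * (‖τ₂‖ / T₀) *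
            Real.exp (3 * (‖τ₂‖ / T₀) ^ k₂))) :=
      mul_le_mul_of_nonneg_left hpb hK₀.le
    have e₁ : 3 * (‖τ₁‖ / T₀) ^ k₁ = 3 / T₀ ^ k₁ * ‖τ₁‖ ^ k₁ := by
      rw [div_pow]; ring
    have e₂ : 3 * (‖τ₂‖ / T₀) ^ k₂ = 3 / T₀ ^ k₂ * ‖τ₂‖ ^ k₂ := by
      rw [div_pow]; ring
    show ‖∑' p : ℕ × ℕ, f p (τ₁, τ₂)‖ ≤ _
    calc ‖∑' p : ℕ × ℕ, f p (τ₁, τ₂)‖ ≤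
        K₀ * ((24 * k₁ * Real.exp 3 * (‖τ₁‖ / T₀) *
            Real.exp (3 * (‖τ₁‖ / T₀) ^ k₁)) *
          (24 * k₂ * Real.exp 3 * (‖τ₂‖ / T₀) *
            Real.exp (3 * (‖τ₂‖ / T₀) ^ k₂))) := le_trans h1 (le_trans h2 h3)
      _ = K₀ * (24 * k₁ * Real.exp 3 / T₀) * (24 * k₂ * Real.exp 3 / T₀) *
          ‖τ₁‖ * ‖τ₂‖ *
          Real.exp (3 / T₀ ^ k₁ * ‖τ₁‖ ^ k₁ + 3 / T₀ ^ k₂ * ‖τ₂‖ ^ k₂) := by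
        rw [Real.exp_add, ← e₁, ← e₂]
        ring
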